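/- Let f : [a,b] → ℝ be convex, x ∈ [a,b]^n, and α, β, γ ∈ ℝ^n nonnegative weight tuples each summing to 1 with βᵢ + γᵢ > 0 for all i. Then J(f,x,α) ≤ 2 · max_{1≤i≤n} (αᵢ/(βᵢ+γᵢ)) · J(f, x, (β+γ)/2). -/

import Mathlib

/-- Upper bound of Theorem 4:
`J(f,x,α) ≤ 2 · max_i (αᵢ/(βᵢ+γᵢ)) · J(f, x, (β+γ)/2)`. -/
theorem stmt3 {a b : ℝ} (f : ℝ → ℝ) (hf : ConvexOn ℝ (Set.Icc a b) f)
    {n : ℕ} (hn : 0 < n) (x : Fin n → ℝ) (hx : ∀ i, x i ∈ Set.Icc a b)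
    (α β γ : Fin n → ℝ)
    (hα : ∀ i, 0 ≤ α i) (hβ : ∀ i, 0 ≤ β i) (hγ : ∀ i, 0 ≤ γ i)
    (hαs : ∑ i, α i = 1) (hβs : ∑ i, β i = 1) (hγs : ∑ i, γ i = 1)
    (hβγ : ∀ i, 0 < β i + γ i) :
    ∑ i, α i * f (x i) - f (∑ i, α i * x i) ≤
    2 * (Finset.univ.sup' ⟨⟨0, hn⟩, Finset.mem_univ _⟩ (fun i => α i / (β i + γ i))) *
      (∑ i, (β i + γ i) / 2 * f (x i) - f (∑ i, (β i + γ i) / 2 * x i)) := by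
  set M := Finset.univ.sup' ⟨⟨0, hn⟩, Finset.mem_univ _⟩ (fun i => α i / (β i + γ i)) with hM
  set S := 2 * M with hSdef
  set w : Fin n → ℝ := fun i => (β i + γ i) / 2 with hw
  have hw0 : ∀ i, 0 < w i := fun i => by have := hβγ i; simp only [hw]; linarith
  have hws : ∑ i, w i = 1 := by
    simp only [hw, div_eq_mul_inv, ← Finset.sum_mul, Finset.sum_add_distrib, hβs, hγs]
    norm_num
  have hSle : ∀ i, α i ≤ S * w i := by
    intro i
    have h1 : α i / (β i + γ i) ≤ M := by
      rw [hM]; exact Finset.le_sup' (fun j => α j / (β j + γ j)) (Finset.mem_univ i)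
    have h2 := hβγ i
    rw [div_le_iff₀ h2] at h1
    simp only [hw, hSdef]
    nlinarith
  have hS1 : 1 ≤ S := by
    have : (1:ℝ) = ∑ i, α i := hαs.symm
    calc (1:ℝ) = ∑ i, α i := hαs.symm
      _ ≤ ∑ i, S * w i := Finset.sum_le_sum fun i _ => hSle i
      _ = S := by rw [← Finset.mul_sum, hws, mul_one]
  -- membership lemmas
  have hmem : ∀ (v : Fin n → ℝ), (∀ i, 0 ≤ v i) → ∑ i, v i = 1 →
      ∑ i, v i * x i ∈ Set.Icc a b := by
    intro v hv hvs
    have := (convex_Icc a b).sum_mem (t := Finset.univ) (fun i _ => hv i) hvs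
      (fun i _ => hx i)
    simpa [smul_eq_mul] using this
  rcases eq_or_lt_of_le hS1 with hS1' | hS1'
  · -- S = 1 : α = w
    have haw : ∀ i, α i = w i := by
      have hnn : ∀ i ∈ Finset.univ, 0 ≤ w i - α i := by
        intro i _; have := hSle i; rw [← hS1'] at this; linarith
      have hsum : ∑ i, (w i - α i) = 0 := by
        rw [Finset.sum_sub_distrib, hws, hαs]; ring
      intro i
      have := (Finset.sum_eq_zero_iff_of_nonneg hnn).1 hsum i (Finset.mem_univ i)
      linarith
    have hx1 : ∑ i, α i * f (x i) = ∑ i, (β i + γ i) / 2 * f (x i) :=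
      Finset.sum_congr rfl fun i _ => by rw [haw i]
    have hx2 : ∑ i, α i * x i = ∑ i, (β i + γ i) / 2 * x i :=
      Finset.sum_congr rfl fun i _ => by rw [haw i]
    rw [hx1, hx2, ← hS1', one_mul]
  · -- S > 1
    set u : Fin n → ℝ := fun i => (S * w i - α i) / (S - 1) with hu
    have hS0 : 0 < S - 1 := by linarith
    have hu0 : ∀ i, 0 ≤ u i := fun i => div_nonneg (by have := hSle i; linarith) hS0.le
    have hus : ∑ i, u i = 1 := by
      simp only [hu, div_eq_mul_inv, ← Finset.sum_mul, Finset.sum_sub_distrib,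
        ← Finset.mul_sum, hws, hαs]
      field_simp
    -- Jensen for u
    have hJ : f (∑ i, u i * x i) ≤ ∑ i, u i * f (x i) := by
      have := hf.map_sum_le (t := Finset.univ) (fun i _ => hu0 i) hus (fun i _ => hx i)
      simpa [smul_eq_mul] using this
    -- convexity combination
    have hp : ∑ i, α i * x i ∈ Set.Icc a b := hmem α hα hαs
    have hq : ∑ i, u i * x i ∈ Set.Icc a b := hmem u hu0 hus
    have hθ : (0:ℝ) ≤ 1 / S := by positivity
    have hθ' : (0:ℝ) ≤ 1 - 1 / S := by
      have : 1 / S ≤ 1 := by rw [div_le_one (by linarith)]; linarith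
      linarith
    have hcomb := hf.2 hp hq hθ hθ' (by ring)
    simp only [smul_eq_mul] at hcomb
    have hkey : (1 / S) * (∑ i, α i * x i) + (1 - 1 / S) * (∑ i, u i * x i)
        = ∑ i, w i * x i := by
      rw [Finset.mul_sum, Finset.mul_sum, ← Finset.sum_add_distrib]
      refine Finset.sum_congr rfl fun i _ => ?_
      simp only [hu]
      field_simp
      ring
    rw [hkey] at hcomb
    have husf : (1 - 1 / S) * (∑ i, u i * f (x i))
        = ∑ i, w i * f (x i) - (1/S) * ∑ i, α i * f (x i) := by
      rw [Finset.mul_sum, Finset.mul_sum, ← Finset.sum_sub_distrib]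
      refine Finset.sum_congr rfl fun i _ => ?_
      simp only [hu]
      field_simp
    have hJf : f (∑ i, w i * x i) ≤ 1 / S * f (∑ i, α i * x i)
        + (∑ i, w i * f (x i) - (1/S) * ∑ i, α i * f (x i)) := by
      calc f (∑ i, w i * x i) ≤ 1 / S * f (∑ i, α i * x i)
            + (1 - 1 / S) * f (∑ i, u i * x i) := hcomb
        _ ≤ 1 / S * f (∑ i, α i * x i) + (1 - 1 / S) * (∑ i, u i * f (x i)) := by
            have := mul_le_mul_of_nonneg_left hJ hθ'
            linarith
        _ = _ := by rw [husf]
    have hwx : ∑ i, w i * x i = ∑ i, (β i + γ i) / 2 * x i := rfl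
    have hwf : ∑ i, w i * f (x i) = ∑ i, (β i + γ i) / 2 * f (x i) := rfl
    rw [hwx, hwf] at hJf
    have hSpos : (0:ℝ) < S := by linarith
    have hmul := mul_le_mul_of_nonneg_left hJf hSpos.le
    have h2 : S * (1 / S * f (∑ i, α i * x i)
        + (∑ i, (β i + γ i) / 2 * f (x i) - (1/S) * ∑ i, α i * f (x i)))
        = f (∑ i, α i * x i) + S * ∑ i, (β i + γ i) / 2 * f (x i)
          - ∑ i, α i * f (x i) := by
      field_simp
      ring
    rw [h2] at hmul
    rw [mul_sub]
    linarith
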